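/- Fix K ≥ 1 and M ≥ 0, set N = (M+1)^K, and for a grid point m : Fin K → Fin (M+1) let v(m) = Σ_{l<K} m(l)·(M+1)^l and φ(m) ∈ ℝ^{N+1} with φ(m)_j = max(0, v(m) − (N − 1 − j)). Then the family of vectors (φ(m))_{m}, indexed by all (M+1)^K grid points m, is linearly independent in ℝ^{N+1}. Consequently the span of {φ(m) : m a grid point} has dimension exactly (M+1)^K. -/

import Mathlib

/-- The base-(M+1) value of a grid point `m : Fin K → Fin (M+1)`. -/
def gridVal (K M : ℕ) (m : Fin K → Fin (M + 1)) : ℕ :=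
  ∑ l : Fin K, (m l : ℕ) * (M + 1) ^ (l : ℕ)

/-- The ReLU-layer output `φ(m) ∈ ℝ^{N+1}`, `N = (M+1)^K`, with coordinates
`φ(m)_j = max (0, v(m) − (N − 1 − j))`. -/
noncomputable def phi (K M : ℕ) (m : Fin K → Fin (M + 1))
    (j : Fin ((M + 1) ^ K + 1)) : ℝ :=
  max 0 ((gridVal K M m : ℝ) - (((M + 1) ^ K : ℕ) - 1 - (j : ℕ) : ℝ))

lemma gridVal_eq (K M : ℕ) (m : Fin K → Fin (M + 1)) :
    gridVal K M m = (finFunctionFinEquiv m : ℕ) := by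
  simp [gridVal, finFunctionFinEquiv_apply]

lemma gridVal_lt (K M : ℕ) (m : Fin K → Fin (M + 1)) :
    gridVal K M m < (M + 1) ^ K := by
  rw [gridVal_eq]; exact (finFunctionFinEquiv m).isLt

lemma gridVal_inj (K M : ℕ) : Function.Injective (gridVal K M) := by
  intro a b h
  rw [gridVal_eq, gridVal_eq] at h
  exact finFunctionFinEquiv.injective (Fin.val_injective h)

lemma relu3 (a b : ℕ) :
    max 0 ((a : ℝ) - b + 1) - 2 * max 0 ((a : ℝ) - b) + max 0 ((a : ℝ) - b - 1)
      = if a = b then 1 else 0 := by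
  rcases lt_trichotomy a b with h | h | h
  · rw [if_neg h.ne]
    have h1 : (a : ℝ) + 1 ≤ b := by exact_mod_cast h
    rw [max_eq_left (by linarith), max_eq_left (by linarith), max_eq_left (by linarith)]
    ring
  · subst h
    norm_num
  · rw [if_neg h.ne']
    have h1 : (b : ℝ) + 1 ≤ a := by exact_mod_cast h
    rw [max_eq_right (by linarith), max_eq_right (by linarith), max_eq_right (by linarith)]
    ring

lemma relu2 (a b : ℕ) (h : a ≤ b) :
    max 0 ((a : ℝ) - b + 1) - max 0 ((a : ℝ) - b) = if a = b then 1 else 0 := by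
  rcases h.lt_or_eq with h | h
  · rw [if_neg h.ne]
    have h1 : (a : ℝ) + 1 ≤ b := by exact_mod_cast h
    rw [max_eq_left (by linarith), max_eq_left (by linarith)]
    ring
  · subst h
    norm_num

theorem stmt_2 (K M : ℕ) (hK : 1 ≤ K) :
    LinearIndependent ℝ (phi K M) ∧
    Module.finrank ℝ (Submodule.span ℝ (Set.range (phi K M))) = (M + 1) ^ K := by
  have hli : LinearIndependent ℝ (phi K M) := by
    rw [Fintype.linearIndependent_iff]
    intro g hg m0
    have hcoord : ∀ j : Fin ((M + 1) ^ K + 1), ∑ m, g m * phi K M m j = 0 := by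
      intro j
      have := congrFun hg j
      simpa [Finset.sum_apply] using this
    set t := gridVal K M m0 with htdef
    have htN : t < (M + 1) ^ K := gridVal_lt K M m0
    have hsum : (∑ m, g m * (if gridVal K M m = t then (1 : ℝ) else 0)) = g m0 := by
      rw [Finset.sum_eq_single m0]
      · simp [htdef]
      · intro m _ hm
        rw [if_neg (fun h => hm (gridVal_inj K M h)), mul_zero]
      · intro h; exact absurd (Finset.mem_univ m0) h
    by_cases h2 : t + 2 ≤ (M + 1) ^ K
    · -- use second differences at coordinates s, s+1, s+2 where N = t + 2 + s
      obtain ⟨s, hs⟩ : ∃ s, (M + 1) ^ K = t + 2 + s := ⟨(M + 1) ^ K - (t + 2), by omega⟩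
      set j2 : Fin ((M + 1) ^ K + 1) := ⟨s + 2, by omega⟩ with hj2
      set j1 : Fin ((M + 1) ^ K + 1) := ⟨s + 1, by omega⟩ with hj1
      set j0 : Fin ((M + 1) ^ K + 1) := ⟨s, by omega⟩ with hj0
      have hc : (((M + 1) ^ K : ℕ) : ℝ) = (t : ℝ) + 2 + s := by
        rw [hs]; push_cast; ring
      have e2 : ∀ m, phi K M m j2 = max 0 ((gridVal K M m : ℝ) - t + 1) := by
        intro m
        unfold phi
        rw [hc]
        congr 1
        simp only [hj2, Fin.val_mk]
        push_cast
        ring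
      have e1 : ∀ m, phi K M m j1 = max 0 ((gridVal K M m : ℝ) - t) := by
        intro m
        unfold phi
        rw [hc]
        congr 1
        simp only [hj1, Fin.val_mk]
        push_cast
        ring
      have e0 : ∀ m, phi K M m j0 = max 0 ((gridVal K M m : ℝ) - t - 1) := by
        intro m
        unfold phi
        rw [hc]
        congr 1
        simp only [hj0, Fin.val_mk]
        push_cast
        ring
      have key : ∀ m : Fin K → Fin (M + 1),
          g m * (if gridVal K M m = t then (1 : ℝ) else 0)
            = g m * phi K M m j2 - 2 * (g m * phi K M m j1) + g m * phi K M m j0 := by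
        intro m
        rw [e2 m, e1 m, e0 m, ← relu3 (gridVal K M m) t]
        ring
      rw [Finset.sum_congr rfl (fun m _ => key m)] at hsum
      rw [Finset.sum_add_distrib, Finset.sum_sub_distrib, ← Finset.mul_sum,
        hcoord j2, hcoord j1, hcoord j0] at hsum
      simpa using hsum.symm
    · -- t = N - 1 : use first difference at coordinates 0, 1
      have ht1 : t + 1 = (M + 1) ^ K := by omega
      set j1 : Fin ((M + 1) ^ K + 1) := ⟨1, by omega⟩ with hj1
      set j0 : Fin ((M + 1) ^ K + 1) := ⟨0, by omega⟩ with hj0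
      have hc : (((M + 1) ^ K : ℕ) : ℝ) = (t : ℝ) + 1 := by
        rw [← ht1]; push_cast; ring
      have e1 : ∀ m, phi K M m j1 = max 0 ((gridVal K M m : ℝ) - t + 1) := by
        intro m
        unfold phi
        rw [hc]
        congr 1
        simp only [hj1, Fin.val_mk]
        push_cast
        ring
      have e0 : ∀ m, phi K M m j0 = max 0 ((gridVal K M m : ℝ) - t) := by
        intro m
        unfold phi
        rw [hc]
        congr 1
        simp only [hj0, Fin.val_mk]
        push_cast
        ring
      have key : ∀ m : Fin K → Fin (M + 1),
          g m * (if gridVal K M m = t then (1 : ℝ) else 0)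
            = g m * phi K M m j1 - g m * phi K M m j0 := by
        intro m
        have hle : gridVal K M m ≤ t := by
          have := gridVal_lt K M m
          omega
        rw [e1 m, e0 m, ← relu2 (gridVal K M m) t hle]
        ring
      rw [Finset.sum_congr rfl (fun m _ => key m)] at hsum
      rw [Finset.sum_sub_distrib, hcoord j1, hcoord j0] at hsum
      simpa using hsum.symm
  refine ⟨hli, ?_⟩
  rw [finrank_span_eq_card hli]
  simp
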